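/- The set {g_1(x_1), ..., g_n(x_n)} is a universal Gröbner basis of the ideal I: for every monomial order ≼ on the monomials of F[x_1,...,x_n] and every nonzero f ∈ I, the ≼-leading monomial of f is divisible by x_i^{d_i} for some index i (equivalently, the i-th exponent of the leading monomial of f is at least d_i). -/

import Mathlib

open MvPolynomial

/-- The Taylor coefficient `f_u(s)`: the coefficient of `x^u` in `f(x + s)`. -/
noncomputable def taylorCoeff {F : Type*} [Field F] {n : ℕ}
    (f : MvPolynomial (Fin n) F) (s : Fin n → F) (u : Fin n →₀ ℕ) : F :=
  coeff u (aeval (fun i => X i + C (s i)) f)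

/-- Membership in the ideal `I(s, w)`: all Taylor coefficients `f_u(s)` with
`u < w` (componentwise) vanish. -/
def memPointIdeal {F : Type*} [Field F] {n : ℕ}
    (f : MvPolynomial (Fin n) F) (s : Fin n → F) (w : Fin n → ℕ) : Prop :=
  ∀ u : Fin n →₀ ℕ, (∀ i, u i < w i) → taylorCoeff f s u = 0

/-- The polynomial `g_i(x_i) = ∏_{s ∈ S_i} (x_i - s)^{m_i(s)}`. -/
noncomputable def gPoly {F : Type*} [Field F] {n : ℕ}
    (S : Fin n → Finset F) (m : Fin n → F → ℕ) (i : Fin n) : MvPolynomial (Fin n) F :=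
  ∏ s ∈ S i, (X i - C s) ^ m i s

/-- The size `d_i = Σ_{s ∈ S_i} m_i(s)` of the multiset `(S_i, m_i)`. -/
def dSize {F : Type*} {n : ℕ} (S : Fin n → Finset F) (m : Fin n → F → ℕ) (i : Fin n) : ℕ :=
  ∑ s ∈ S i, m i s
section Aux
variable {F : Type*} [Field F] {n : ℕ}

lemma memPointIdeal_sub {f g : MvPolynomial (Fin n) F} {s : Fin n → F} {w : Fin n → ℕ}
    (hf : memPointIdeal f s w) (hg : memPointIdeal g s w) : memPointIdeal (f - g) s w := by
  intro u hu
  have : taylorCoeff (f - g) s u = taylorCoeff f s u - taylorCoeff g s u := by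
    simp [taylorCoeff, map_sub, coeff_sub]
  rw [this, hf u hu, hg u hu, sub_zero]

lemma memPointIdeal_mul (q : MvPolynomial (Fin n) F) {f : MvPolynomial (Fin n) F}
    {s : Fin n → F} {w : Fin n → ℕ} (hf : memPointIdeal f s w) :
    memPointIdeal (q * f) s w := by
  intro u hu
  have : taylorCoeff (q * f) s u =
      ∑ x ∈ Finset.HasAntidiagonal.antidiagonal u,
        coeff x.1 (aeval (fun i => X i + C (s i)) q) *
        coeff x.2 (aeval (fun i => X i + C (s i)) f) := by
    simp [taylorCoeff, map_mul, coeff_mul]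
  rw [this]
  refine Finset.sum_eq_zero fun x hx => ?_
  rw [Finset.HasAntidiagonal.mem_antidiagonal] at hx
  have hx2 : taylorCoeff f s x.2 = 0 := by
    refine hf x.2 fun i => lt_of_le_of_lt ?_ (hu i)
    have := congrArg (fun v : Fin n →₀ ℕ => v i) hx
    simpa using le_of_add_le_right (le_of_eq this)
  rw [taylorCoeff] at hx2
  rw [hx2, mul_zero]

lemma memPointIdeal_gPoly [DecidableEq F] (S : Fin n → Finset F) (m : Fin n → F → ℕ) (j : Fin n)
    {s : Fin n → F} (hs : s j ∈ S j) :
    memPointIdeal (gPoly S m j) s (fun i => m i (s i)) := by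
  intro u hu
  have hexp : aeval (fun i : Fin n => X i + C (s i)) (gPoly S m j) =
      (X j) ^ (m j (s j)) * ((X j + C (s j) - C (s j)) ^ 0 *
        ∏ t ∈ (S j).erase (s j), (X j + C (s j) - C t) ^ m j t) := by
    rw [pow_zero, one_mul, gPoly, map_prod]
    rw [← Finset.mul_prod_erase _ _ hs]
    congr 1
    · simp
    · refine Finset.prod_congr rfl fun t _ => ?_
      simp
  rw [pow_zero, one_mul] at hexp
  rw [taylorCoeff, hexp, X_pow_eq_monomial, mul_comm, coeff_mul_monomial']
  rw [if_neg]
  intro hle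
  exact absurd (Finsupp.single_le_iff.mp hle) (not_le.mpr (hu j))

end Aux

section Split
variable {F : Type*} [Field F] {n : ℕ}

lemma finSuccEquiv_shift (s : Fin (n+1) → F) (f : MvPolynomial (Fin (n+1)) F) :
    finSuccEquiv F n (aeval (fun i => X i + C (s i)) f) =
      Polynomial.map (aeval (fun i => X i + C (s i.succ)) : MvPolynomial (Fin n) F →ₐ[F] _)
        (Polynomial.taylor (C (s 0)) (finSuccEquiv F n f)) := by
  induction f using MvPolynomial.induction_on with
  | C a => simp [Polynomial.taylor_C, finSuccEquiv_apply]
  | add p q hp hq => simp only [map_add, Polynomial.map_add, hp, hq]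
  | mul_X p i hp =>
    rw [map_mul, map_mul, map_mul, Polynomial.taylor_mul, Polynomial.map_mul, hp]
    refine congrArg (HMul.hMul _) ?_
    refine Fin.cases ?_ ?_ i
    · simp [finSuccEquiv_X_zero, Polynomial.taylor_X, Polynomial.taylor_C,
        finSuccEquiv_apply]
    · intro j
      simp [finSuccEquiv_X_succ, Polynomial.taylor_C, finSuccEquiv_apply]

lemma taylorCoeff_succ (f : MvPolynomial (Fin (n+1)) F) (s : Fin (n+1) → F)
    (u : Fin (n+1) →₀ ℕ) :
    taylorCoeff f s u =
      taylorCoeff ((Polynomial.taylor (C (s 0)) (finSuccEquiv F n f)).coeff (u 0))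
        (fun i => s i.succ) (Finsupp.tail u) := by
  rw [taylorCoeff, taylorCoeff, ← Finsupp.cons_tail u,
    ← finSuccEquiv_coeff_coeff (Finsupp.tail u) _ (u 0), finSuccEquiv_shift,
    Polynomial.coeff_map]
  simp [Finsupp.cons_tail]

end Split

section LemmaA
variable {F : Type*} [Field F]

lemma taylor_pow' {R : Type*} [CommSemiring R] (r : R) (p : Polynomial R) (k : ℕ) :
    Polynomial.taylor r (p ^ k) = (Polynomial.taylor r p) ^ k := by
  induction k with
  | zero => simp [Polynomial.taylor_one]
  | succ k ihk => rw [pow_succ, Polynomial.taylor_mul, ihk, pow_succ]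

/-- coefficients of the Taylor expansion in the first variable of a polynomial
whose relevant coefficients vanish, vanish -/
lemma coeff_taylor_coeff_eq_zero {n : ℕ} (f : MvPolynomial (Fin (n+1)) F) (t : F)
    (j : ℕ) (u' : Fin n →₀ ℕ) (h : ∀ k : ℕ, coeff (u'.cons k) f = 0) :
    coeff u' ((Polynomial.taylor (C t) (finSuccEquiv F n f)).coeff j) = 0 := by
  set p := finSuccEquiv F n f with hp
  have hcoeff : ∀ k : ℕ, coeff u' (p.coeff k) = 0 := by
    intro k
    rw [finSuccEquiv_coeff_coeff]
    exact h k
  rw [Polynomial.taylor_coeff]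
  rw [Polynomial.eval_eq_sum_range]
  rw [MvPolynomial.coeff_sum]
  refine Finset.sum_eq_zero fun k _ => ?_
  rw [Polynomial.hasseDeriv_coeff]
  have heq : ((k + j).choose j : MvPolynomial (Fin n) F) * p.coeff (k + j) * (C t) ^ k
      = p.coeff (k + j) * C (((k + j).choose j : F) * t ^ k) := by
    rw [map_mul, ← C_pow, map_natCast]
    ring
  rw [heq, mul_comm, MvPolynomial.coeff_C_mul, hcoeff, mul_zero]

lemma lemmaA : ∀ (n : ℕ) (S : Fin n → Finset F) (m : Fin n → F → ℕ)
    (f : MvPolynomial (Fin n) F),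
    (∀ s : Fin n → F, (∀ i, s i ∈ S i) → memPointIdeal f s fun i => m i (s i)) →
    (∀ u ∈ f.support, ∀ i, u i < dSize S m i) → f = 0 := by
  intro n
  induction n with
  | zero =>
    intro S m f hI _
    have h0 := hI (fun i => i.elim0) (fun i => i.elim0) 0 (fun i => i.elim0)
    rw [taylorCoeff] at h0
    rw [MvPolynomial.eq_C_of_isEmpty f] at h0 ⊢
    simp only [aeval_C, algebraMap_eq] at h0
    rw [MvPolynomial.coeff_zero_C] at h0
    rw [h0, map_zero]
  | succ n ih =>
    intro S m f hI hsupp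
    by_cases hf : f = 0
    · exact hf
    exfalso
    set p := finSuccEquiv F n f with hp
    have hpne : p ≠ 0 := by
      simp [hp, hf]
    -- d 0 is positive
    obtain ⟨u, hu⟩ := (MvPolynomial.support_nonempty.mpr hf)
    have hd0 : 0 < dSize S m 0 := lt_of_le_of_lt (Nat.zero_le _) (hsupp u hu 0)
    -- each taylor coefficient in x0 at t ∈ S 0 of order < m 0 t vanishes
    have hbzero : ∀ t ∈ S 0, ∀ j < m 0 t,
        (Polynomial.taylor (C t) p).coeff j = 0 := by
      intro t ht j hj
      set b := (Polynomial.taylor (C t) p).coeff j with hb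
      -- b satisfies the interpolation conditions for the smaller grid
      refine ih (fun i => S i.succ) (fun i => m i.succ) b ?_ ?_
      · intro s' hs' u' hu'
        have hkey := taylorCoeff_succ f (Fin.cons t s') (u'.cons j)
        have hzero : taylorCoeff f (Fin.cons t s') (u'.cons j) = 0 := by
          refine hI (Fin.cons t s') ?_ (u'.cons j) ?_
          · intro i
            refine Fin.cases ?_ ?_ i
            · simpa using ht
            · intro k; simpa using hs' k
          · intro i
            refine Fin.cases ?_ ?_ i
            · simpa [Finsupp.cons_zero] using hj
            · intro k; simpa [Finsupp.cons_succ] using hu' k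
        rw [hkey] at hzero
        rw [taylorCoeff]
        rw [taylorCoeff] at hzero
        simpa [Finsupp.cons_zero, Finsupp.tail_cons, Fin.cons_zero, Fin.cons_succ] using hzero
      · -- support condition
        intro u' hu' i
        rw [MvPolynomial.mem_support_iff, hb] at hu'
        by_cases hall : ∀ k : ℕ, coeff (u'.cons k) f = 0
        · exact absurd (coeff_taylor_coeff_eq_zero f t j u' hall) hu'
        · push_neg at hall
          obtain ⟨k, hk⟩ := hall
          have := hsupp (u'.cons k) (MvPolynomial.mem_support_iff.mpr hk) i.succ
          simpa [Finsupp.cons_succ, dSize] using this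
    -- divisibility
    have hdvd : ∀ t ∈ S 0,
        (Polynomial.X - Polynomial.C (C t : MvPolynomial (Fin n) F)) ^ (m 0 t) ∣ p := by
      intro t ht
      have hXdvd : Polynomial.X ^ (m 0 t) ∣ Polynomial.taylor (C t) p := by
        rw [Polynomial.X_pow_dvd_iff]
        intro d hd
        exact hbzero t ht d hd
      obtain ⟨q, hq⟩ := hXdvd
      have : p = Polynomial.taylor (-(C t)) (Polynomial.taylor (C t) p) := by
        rw [Polynomial.taylor_taylor, neg_add_cancel, Polynomial.taylor_zero]
      rw [this, hq, Polynomial.taylor_mul, taylor_pow', Polynomial.taylor_X]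
      rw [map_neg, ← sub_eq_add_neg]
      exact Dvd.intro _ rfl
    -- the product divides p
    have hproddvd : (∏ t ∈ S 0,
        (Polynomial.X - Polynomial.C (C t : MvPolynomial (Fin n) F)) ^ (m 0 t)) ∣ p := by
      refine Finset.prod_dvd_of_coprime ?_ (fun t ht => hdvd t ht)
      intro a _ b _ hab
      refine IsCoprime.pow ?_
      refine Polynomial.isCoprime_X_sub_C_of_isUnit_sub ?_
      rw [← C_sub]
      exact (isUnit_iff_ne_zero.mpr (sub_ne_zero_of_ne hab)).map MvPolynomial.C
    -- degree comparison
    have hprodnat : (∏ t ∈ S 0,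
        (Polynomial.X - Polynomial.C (C t : MvPolynomial (Fin n) F)) ^ (m 0 t)).natDegree
        = dSize S m 0 := by
      rw [Polynomial.natDegree_prod]
      · refine Finset.sum_congr rfl fun t _ => ?_
        rw [Polynomial.natDegree_pow, Polynomial.natDegree_X_sub_C, mul_one]
      · intro t _
        exact pow_ne_zero _ (Polynomial.X_sub_C_ne_zero _)
    have hdeg : p.natDegree < dSize S m 0 := by
      rw [natDegree_finSuccEquiv]
      rw [MvPolynomial.degreeOf_lt_iff hd0]
      intro v hv
      exact hsupp v hv 0
    exact hpne (Polynomial.eq_zero_of_dvd_of_natDegree_lt hproddvd (hprodnat ▸ hdeg))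

end LemmaA

section GStruct
variable {F : Type*} [Field F] {n : ℕ}

lemma coeff_eval₂_X (q : Polynomial F) (j : Fin n) (v : Fin n →₀ ℕ) :
    coeff v (Polynomial.eval₂ (MvPolynomial.C (σ := Fin n)) (X j) q) =
      if Finsupp.single j (v j) = v then q.coeff (v j) else 0 := by
  classical
  rw [Polynomial.eval₂_eq_sum, Polynomial.sum_def, MvPolynomial.coeff_sum]
  have hterm : ∀ k : ℕ, coeff v (C (q.coeff k) * X j ^ k) =
      if Finsupp.single j k = v then q.coeff k else 0 := by
    intro k
    rw [MvPolynomial.coeff_C_mul, MvPolynomial.coeff_X_pow]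
    split_ifs <;> simp
  simp only [hterm]
  split_ifs with hv
  · have hcong : ∀ k ∈ q.support,
        (if (Finsupp.single j k) = v then q.coeff k else 0)
          = if k = v j then q.coeff k else 0 := by
      intro k _
      refine if_congr ⟨fun h => ?_, fun h => by rw [h, hv]⟩ rfl rfl
      have := congrArg (fun w : Fin n →₀ ℕ => w j) h
      simpa using this
    rw [Finset.sum_congr rfl hcong, Finset.sum_ite_eq' q.support (v j) q.coeff]
    split_ifs with hmem
    · rfl
    · rw [Polynomial.notMem_support_iff] at hmem
      rw [hmem]
  · refine Finset.sum_eq_zero fun k hk => ?_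
    rw [if_neg]
    intro hkv
    apply hv
    have hkvj : k = v j := by
      have := congrArg (fun w : Fin n →₀ ℕ => w j) hkv
      simpa using this
    rw [hkvj] at hkv
    exact hkv

lemma gPoly_eq_eval₂ (S : Fin n → Finset F) (m : Fin n → F → ℕ) (j : Fin n) :
    gPoly S m j = Polynomial.eval₂ MvPolynomial.C (X j)
      (∏ t ∈ S j, (Polynomial.X - Polynomial.C t) ^ m j t) := by
  rw [gPoly]
  rw [← Polynomial.coe_eval₂RingHom, map_prod]
  refine Finset.prod_congr rfl fun t _ => ?_
  rw [map_pow, map_sub, Polynomial.coe_eval₂RingHom, Polynomial.eval₂_X, Polynomial.eval₂_C]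

lemma uniProd_monic (S : Fin n → Finset F) (m : Fin n → F → ℕ) (j : Fin n) :
    (∏ t ∈ S j, (Polynomial.X - Polynomial.C t) ^ m j t).Monic :=
  Polynomial.monic_prod_of_monic _ _ fun t _ => (Polynomial.monic_X_sub_C t).pow _

lemma uniProd_natDegree (S : Fin n → Finset F) (m : Fin n → F → ℕ) (j : Fin n) :
    (∏ t ∈ S j, (Polynomial.X - Polynomial.C t) ^ m j t).natDegree = dSize S m j := by
  rw [Polynomial.natDegree_prod]
  · exact Finset.sum_congr rfl fun t _ => by
      rw [Polynomial.natDegree_pow, Polynomial.natDegree_X_sub_C, mul_one]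
  · exact fun t _ => pow_ne_zero _ (Polynomial.X_sub_C_ne_zero _)

lemma coeff_gPoly_top (S : Fin n → Finset F) (m : Fin n → F → ℕ) (j : Fin n) :
    coeff (Finsupp.single j (dSize S m j)) (gPoly S m j) = 1 := by
  rw [gPoly_eq_eval₂, coeff_eval₂_X]
  rw [if_pos (by simp)]
  have h1 := (uniProd_monic S m j).leadingCoeff
  rw [Polynomial.leadingCoeff, uniProd_natDegree] at h1
  simpa using h1

lemma support_gPoly (S : Fin n → Finset F) (m : Fin n → F → ℕ) (j : Fin n)
    (v : Fin n →₀ ℕ) (hv : coeff v (gPoly S m j) ≠ 0) :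
    ∃ k ≤ dSize S m j, v = Finsupp.single j k := by
  rw [gPoly_eq_eval₂, coeff_eval₂_X] at hv
  split_ifs at hv with hsing
  · refine ⟨v j, ?_, hsing.symm⟩
    rw [← uniProd_natDegree S m j]
    exact Polynomial.le_natDegree_of_ne_zero hv
  · exact absurd rfl hv

end GStruct

section Order
variable {n : ℕ}

lemma le_of_pointwise_le (le : (Fin n →₀ ℕ) → (Fin n →₀ ℕ) → Prop)
    (hadd : ∀ a b c, le a b → le (a + c) (b + c))
    (hzero : ∀ a, le 0 a) {a b : Fin n →₀ ℕ} (h : a ≤ b) : le a b := by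
  have hc := hadd 0 (b - a) a (hzero (b - a))
  rw [zero_add] at hc
  rwa [tsub_add_cancel_of_le h] at hc

lemma wf_strict (le : (Fin n →₀ ℕ) → (Fin n →₀ ℕ) → Prop)
    (hantisymm : ∀ a b, le a b → le b a → a = b)
    (htrans : ∀ a b c, le a b → le b c → le a c)
    (hadd : ∀ a b c, le a b → le (a + c) (b + c))
    (hzero : ∀ a, le 0 a) :
    WellFounded (fun a b : Fin n →₀ ℕ => le a b ∧ a ≠ b) := by
  haveI : IsIrrefl (Fin n →₀ ℕ) (fun a b => le a b ∧ a ≠ b) := ⟨fun a h => h.2 rfl⟩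
  haveI : IsTrans (Fin n →₀ ℕ) (fun a b => le a b ∧ a ≠ b) := by
    refine ⟨fun a b c hab hbc => ⟨htrans _ _ _ hab.1 hbc.1, fun hac => ?_⟩⟩
    subst hac
    exact hab.2 (hantisymm _ _ hab.1 hbc.1)
  haveI : IsStrictOrder (Fin n →₀ ℕ) (fun a b => le a b ∧ a ≠ b) := {}
  rw [RelEmbedding.wellFounded_iff_isEmpty]
  constructor
  intro g
  obtain ⟨k, l, hkl, hle⟩ := (wellQuasiOrdered_le (α := Fin n →₀ ℕ)) ⇑g
  have h1 : le (g l) (g k) ∧ g l ≠ g k := g.map_rel_iff.mpr hkl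
  exact h1.2 (hantisymm _ _ h1.1 (le_of_pointwise_le le hadd hzero hle))

lemma finset_exists_max {α : Type*} (le : α → α → Prop)
    (htotal : ∀ a b, le a b ∨ le b a)
    (htrans : ∀ a b c, le a b → le b c → le a c)
    (B : Finset α) (hB : B.Nonempty) : ∃ u ∈ B, ∀ v ∈ B, le v u := by
  classical
  induction B using Finset.induction_on with
  | empty => exact absurd hB (by simp)
  | insert _ _ hx ih =>
    rename_i a s
    by_cases hs : s.Nonempty
    · obtain ⟨u, hu, hmax⟩ := ih hs
      rcases htotal u a with h | h
      · refine ⟨a, Finset.mem_insert_self _ _, fun v hv => ?_⟩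
        rcases Finset.mem_insert.mp hv with rfl | hv
        · rcases htotal v v with h' | h' <;> exact h'
        · exact htrans _ _ _ (hmax v hv) h
      · refine ⟨u, Finset.mem_insert_of_mem hu, fun v hv => ?_⟩
        rcases Finset.mem_insert.mp hv with rfl | hv
        · exact h
        · exact hmax v hv
    · rw [Finset.not_nonempty_iff_eq_empty] at hs
      subst hs
      refine ⟨a, Finset.mem_insert_self _ _, fun v hv => ?_⟩
      rcases Finset.mem_insert.mp hv with rfl | hv
      · rcases htotal v v with h' | h' <;> exact h'
      · exact absurd hv (by simp)

end Order

/-- `{g_1, …, g_n}` is a universal Gröbner basis of `I`: for every monomial order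
(a linear order on exponent vectors, compatible with addition, with `0` least) and every
nonzero `f ∈ I`, the leading monomial of `f` has `i`-th exponent at least `d_i`
for some `i`, i.e. it is divisible by `x_i^{d_i}`. -/
theorem stmt_4 {F : Type*} [Field F] {n : ℕ} (hn : 1 ≤ n)
    (S : Fin n → Finset F) (hS : ∀ i, (S i).Nonempty)
    (m : Fin n → F → ℕ) (hm : ∀ i, ∀ s ∈ S i, 1 ≤ m i s)
    (le : (Fin n →₀ ℕ) → (Fin n →₀ ℕ) → Prop)
    (hrefl : ∀ a, le a a)
    (hantisymm : ∀ a b, le a b → le b a → a = b)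
    (htrans : ∀ a b c, le a b → le b c → le a c)
    (htotal : ∀ a b, le a b ∨ le b a)
    (hadd : ∀ a b c, le a b → le (a + c) (b + c))
    (hzero : ∀ a, le 0 a)
    (f : MvPolynomial (Fin n) F) (hf0 : f ≠ 0)
    (hfI : ∀ s : Fin n → F, (∀ i, s i ∈ S i) →
      memPointIdeal f s fun i => m i (s i))
    (L : Fin n →₀ ℕ) (hL : L ∈ f.support) (hLmax : ∀ u ∈ f.support, le u L) :
    ∃ i, dSize S m i ≤ L i := by
  classical
  by_contra hcon
  push_neg at hcon
  have hwf := wf_strict le hantisymm htrans hadd hzero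
  set rlt := fun a b : Fin n →₀ ℕ => le a b ∧ a ≠ b with hrlt
  have key : ∀ u₀ : Fin n →₀ ℕ, ∀ f' : MvPolynomial (Fin n) F,
      (∀ s, (∀ i, s i ∈ S i) → memPointIdeal f' s fun i => m i (s i)) →
      coeff L f' ≠ 0 →
      (∀ w ∈ f'.support, le w L) →
      (∀ w ∈ f'.support, (¬ ∀ i, w i < dSize S m i) → rlt w u₀) → False := by
    have step : ∀ x, (∀ y, rlt y x →
        (∀ f' : MvPolynomial (Fin n) F,
          (∀ s, (∀ i, s i ∈ S i) → memPointIdeal f' s fun i => m i (s i)) →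
          coeff L f' ≠ 0 →
          (∀ w ∈ f'.support, le w L) →
          (∀ w ∈ f'.support, (¬ ∀ i, w i < dSize S m i) → rlt w y) → False)) →
        (∀ f' : MvPolynomial (Fin n) F,
          (∀ s, (∀ i, s i ∈ S i) → memPointIdeal f' s fun i => m i (s i)) →
          coeff L f' ≠ 0 →
          (∀ w ∈ f'.support, le w L) →
          (∀ w ∈ f'.support, (¬ ∀ i, w i < dSize S m i) → rlt w x) → False) := by
      intro x ihx f' hI' hcL hsuppL hbadlt
      by_cases hBad : (f'.support.filter (fun w => ¬ ∀ i, w i < dSize S m i)).Nonempty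
      · obtain ⟨u₀, hu₀Bad, hu₀max⟩ := finset_exists_max le htotal htrans _ hBad
        rw [Finset.mem_filter] at hu₀Bad
        obtain ⟨hu₀supp, hu₀bad⟩ := hu₀Bad
        have hu₀bad' := hu₀bad
        push_neg at hu₀bad'
        obtain ⟨j, hj⟩ := hu₀bad'
        set v := u₀ - Finsupp.single j (dSize S m j) with hv
        have hvle : v ≤ u₀ := tsub_le_self
        have hsub : u₀ - v = Finsupp.single j (dSize S m j) := by
          ext i
          rw [Finsupp.tsub_apply, hv, Finsupp.tsub_apply]
          by_cases hij : i = j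
          · subst hij
            simp [Nat.sub_sub_self hj]
          · simp [Finsupp.single_eq_of_ne' (Ne.symm hij)]
        have hvadd : u₀ - v + v = u₀ := tsub_add_cancel_of_le hvle
        rw [hsub] at hvadd
        set c := coeff u₀ f' with hc
        set h := MvPolynomial.monomial v c * gPoly S m j with hh
        have hcoeffh : ∀ w, coeff w h =
            if v ≤ w then coeff (w - v) (gPoly S m j) * c else 0 := by
          intro w
          rw [hh, mul_comm, coeff_mul_monomial']
        have hcu₀ : coeff u₀ h = c := by
          rw [hcoeffh, if_pos hvle, hsub, coeff_gPoly_top, one_mul]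
        have hsupple : ∀ w, coeff w h ≠ 0 → le w u₀ := by
          intro w hw
          rw [hcoeffh] at hw
          split_ifs at hw with hvw
          · have hg : coeff (w - v) (gPoly S m j) ≠ 0 := left_ne_zero_of_mul hw
            obtain ⟨k, hk, hwk⟩ := support_gPoly S m j _ hg
            have hweq : w = Finsupp.single j k + v := by
              have := tsub_add_cancel_of_le hvw
              rw [hwk] at this
              exact this.symm
            rw [hweq, ← hvadd]
            refine hadd _ _ _ ?_
            refine le_of_pointwise_le le hadd hzero ?_
            rw [Finsupp.single_le_iff]
            simp [hk]
          · exact absurd rfl hw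
        set f'' := f' - h with hf''
        have hveq : ∀ w, coeff w f'' = coeff w f' - coeff w h := by
          intro w; rw [hf'', MvPolynomial.coeff_sub]
        have hI'' : ∀ s, (∀ i, s i ∈ S i) → memPointIdeal f'' s fun i => m i (s i) := by
          intro s hs
          exact memPointIdeal_sub (hI' s hs)
            (memPointIdeal_mul _ (memPointIdeal_gPoly S m j (hs j)))
        have hcLh : coeff L h = 0 := by
          by_contra hnz
          have h1 : le L u₀ := hsupple L hnz
          have h2 : le u₀ L := hsuppL u₀ hu₀supp
          have : L = u₀ := hantisymm _ _ h1 h2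
          rw [← this] at hj
          exact absurd hj (not_le.mpr (hcon j))
        have hcL'' : coeff L f'' ≠ 0 := by
          rw [hveq, hcLh, sub_zero]; exact hcL
        have hsuppcases : ∀ w ∈ f''.support, coeff w f' ≠ 0 ∨ coeff w h ≠ 0 := by
          intro w hw
          rw [MvPolynomial.mem_support_iff, hveq] at hw
          by_contra hcontra
          push_neg at hcontra
          rw [hcontra.1, hcontra.2, sub_zero] at hw
          exact hw rfl
        have hsuppL'' : ∀ w ∈ f''.support, le w L := by
          intro w hw
          rcases hsuppcases w hw with h1 | h1
          · exact hsuppL w (MvPolynomial.mem_support_iff.mpr h1)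
          · exact htrans _ _ _ (hsupple w h1) (hsuppL u₀ hu₀supp)
        have hu₀notmem : coeff u₀ f'' = 0 := by
          rw [hveq, hcu₀, hc, sub_self]
        have hbad'' : ∀ w ∈ f''.support, (¬ ∀ i, w i < dSize S m i) → rlt w u₀ := by
          intro w hw hwbad
          have hne : w ≠ u₀ := by
            intro hweq
            rw [hweq, MvPolynomial.mem_support_iff] at hw
            exact hw hu₀notmem
          refine ⟨?_, hne⟩
          rcases hsuppcases w hw with h1 | h1
          · exact hu₀max w (Finset.mem_filter.mpr
              ⟨MvPolynomial.mem_support_iff.mpr h1, hwbad⟩)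
          · exact hsupple w h1
        exact ihx u₀ (hbadlt u₀ hu₀supp hu₀bad) f'' hI'' hcL'' hsuppL'' hbad''
      · rw [Finset.not_nonempty_iff_eq_empty, Finset.filter_eq_empty_iff] at hBad
        have hgood : ∀ u ∈ f'.support, ∀ i, u i < dSize S m i := by
          intro u hu
          by_contra hbadu
          exact (hBad hu) hbadu
        exact hcL (by rw [lemmaA n S m f' hI' hgood]; simp)
    exact fun u₀ => hwf.induction u₀ step
  refine key L f hfI (MvPolynomial.mem_support_iff.mp hL) hLmax ?_
  intro w hw hwbad
  refine ⟨hLmax w hw, fun hweq => hwbad ?_⟩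
  rw [hweq]
  exact hcon
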